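/- Let f : {0,1}^n → ℝ be an affine function f(x) = c + Σ_i c_i x_i, and suppose dist(f(x), {0,1}) ≤ ε for all x ∈ {0,1}^n, where ε < 1/4. Then the function g(x) = round(f(x), {0,1}) (the nearest point of {0,1} to f(x)) depends on at most one coordinate: g ∈ {0, 1, x_1,…,x_n, 1−x_1,…,1−x_n}. -/
import Mathlib


theorem stmt3 (n : ℕ) (c : ℝ) (cc : Fin n → ℝ)
    (f : (Fin n → Bool) → ℝ)
    (hf : ∀ x, f x = c + ∑ i, cc i * (if x i then (1:ℝ) else 0))
    (ε : ℝ) (hε : ε < 1 / 4)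
    (hdist : ∀ x, min |f x| |f x - 1| ≤ ε)
    (g : (Fin n → Bool) → ℝ)
    (hg : ∀ x, (g x = 0 ∨ g x = 1) ∧ |f x - g x| = min |f x| |f x - 1|) :
    (∀ x, g x = 0) ∨ (∀ x, g x = 1) ∨
      ∃ i, (∀ x, g x = if x i then (1:ℝ) else 0) ∨
           (∀ x, g x = 1 - if x i then (1:ℝ) else 0) := by
  have hfg : ∀ x, |f x - g x| ≤ ε := by
    intro x; rw [(hg x).2]; exact hdist x
  -- difference of f under an update
  have hdiff : ∀ (x : Fin n → Bool) (a : Fin n) (b : Bool),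
      f (Function.update x a b) - f x
        = cc a * ((if b then (1:ℝ) else 0) - (if x a then (1:ℝ) else 0)) := by
    intro x a b
    rw [hf, hf, add_sub_add_left_eq_sub, ← Finset.sum_sub_distrib]
    rw [Finset.sum_eq_single a]
    · rw [Function.update_self]; ring
    · intro i _ hi; rw [Function.update_of_ne hi]; ring
    · intro h; exact absurd (Finset.mem_univ a) h
  have gdiffbound : ∀ x y, g x = g y → |f x - f y| ≤ 2 * ε := by
    intro x y h
    have h1 := abs_le.mp (hfg x); have h2 := abs_le.mp (hfg y)
    rw [abs_le]; constructor <;> linarith [h1.1, h1.2, h2.1, h2.2]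
  have gflip : ∀ x y, g x ≠ g y → 1 - 2 * ε ≤ |f x - f y| := by
    intro x y hne
    have h1 := abs_le.mp (hfg x); have h2 := abs_le.mp (hfg y)
    rcases (hg x).1 with hx | hx <;> rcases (hg y).1 with hy | hy
    · exact absurd (hx.trans hy.symm) hne
    · exact le_abs.mpr (Or.inr (by linarith [h1.1, h1.2, h2.1, h2.2]))
    · exact le_abs.mpr (Or.inl (by linarith [h1.1, h1.2, h2.1, h2.2]))
    · exact absurd (hx.trans hy.symm) hne
  -- coordinates with small coefficient don't change g
  have claimA : ∀ (x : Fin n → Bool) (a : Fin n) (b : Bool),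
      |cc a| ≤ 2 * ε → g (Function.update x a b) = g x := by
    intro x a b hca
    by_contra hne
    have h1 := gflip _ _ hne
    have hbd : |(if b then (1:ℝ) else 0) - (if x a then (1:ℝ) else 0)| ≤ 1 := by
      cases b <;> cases hxa : x a <;> simp
    have h2 : |f (Function.update x a b) - f x| ≤ |cc a| := by
      rw [hdiff, abs_mul]
      calc |cc a| * |(if b then (1:ℝ) else 0) - (if x a then (1:ℝ) else 0)|
          ≤ |cc a| * 1 := mul_le_mul_of_nonneg_left hbd (abs_nonneg _)
        _ = |cc a| := mul_one _
    linarith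
  -- at most one large coefficient
  have claimB : ∀ i j, i ≠ j → 2 * ε < |cc i| → |cc j| ≤ 2 * ε := by
    intro i j hij hci
    by_contra hcj
    push_neg at hcj
    set x00 : Fin n → Bool := fun _ => false with hx00
    set x10 := Function.update x00 i true with hx10
    set x01 := Function.update x00 j true with hx01
    set x11 := Function.update x10 j true with hx11
    have hx11' : x11 = Function.update x01 i true := by
      rw [hx11, hx10, hx01, Function.update_comm hij]
    have d1 : f x10 - f x00 = cc i := by
      have := hdiff x00 i true; simpa [hx00] using this
    have d2 : f x11 - f x01 = cc i := by
      have := hdiff x01 i true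
      rw [← hx11'] at this
      simpa [hx01, hx00, Function.update_of_ne hij] using this
    have d3 : f x01 - f x00 = cc j := by
      have := hdiff x00 j true; simpa [hx00] using this
    have d4 : f x11 - f x10 = cc j := by
      have := hdiff x10 j true
      simpa [hx10, hx00, Function.update_of_ne hij.symm] using this
    have n1 : g x10 ≠ g x00 := by
      intro h; have := gdiffbound _ _ h; rw [d1] at this; linarith
    have n2 : g x11 ≠ g x01 := by
      intro h; have := gdiffbound _ _ h; rw [d2] at this; linarith
    have n3 : g x01 ≠ g x00 := by
      intro h; have := gdiffbound _ _ h; rw [d3] at this; linarith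
    have n4 : g x11 ≠ g x10 := by
      intro h; have := gdiffbound _ _ h; rw [d4] at this; linarith
    have two : ∀ a b c : ℝ, (a = 0 ∨ a = 1) → (b = 0 ∨ b = 1) → (c = 0 ∨ c = 1) →
        a ≠ c → b ≠ c → a = b := by
      rintro a b c (rfl | rfl) (rfl | rfl) (rfl | rfl) h1 h2 <;>
        first | rfl | (exact absurd rfl h1) | (exact absurd rfl h2)
    have e1 : g x11 = g x00 := two _ _ _ (hg x11).1 (hg x00).1 (hg x10).1 n4 (Ne.symm n1)
    have e2 : g x10 = g x01 := two _ _ _ (hg x10).1 (hg x01).1 (hg x00).1 n1 n3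
    have s1 : |cc i + cc j| ≤ 2 * ε := by
      have := gdiffbound _ _ e1
      have heq : f x11 - f x00 = cc i + cc j := by linarith
      rwa [heq] at this
    have s2 : |cc i - cc j| ≤ 2 * ε := by
      have := gdiffbound _ _ e2
      have heq : f x10 - f x01 = cc i - cc j := by linarith
      rwa [heq] at this
    have hs1 := abs_le.mp s1
    have hs2 := abs_le.mp s2
    have : |cc i| ≤ 2 * ε := abs_le.mpr ⟨by linarith, by linarith⟩
    linarith
  -- if x and y differ only on small coordinates, g x = g y
  have aux : ∀ (k : ℕ) (x y : Fin n → Bool),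
      (∀ j, x j ≠ y j → |cc j| ≤ 2 * ε) →
      (Finset.univ.filter fun j => x j ≠ y j).card ≤ k → g x = g y := by
    intro k
    induction k with
    | zero =>
      intro x y hA hc
      have hxy : x = y := by
        funext j
        by_contra hj
        have hm : j ∈ Finset.univ.filter fun j => x j ≠ y j := by simp [hj]
        have := Finset.card_pos.mpr ⟨j, hm⟩
        omega
      rw [hxy]
    | succ k ih =>
      intro x y hA hc
      by_cases hxy : x = y
      · rw [hxy]
      · have hex : ∃ a, x a ≠ y a := by
          by_contra h; push_neg at h; exact hxy (funext h)
        obtain ⟨a, ha⟩ := hex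
        have step : g (Function.update x a (y a)) = g x :=
          claimA x a (y a) (hA a ha)
        rw [← step]
        apply ih
        · intro j hj
          rcases eq_or_ne j a with rfl | hne
          · rw [Function.update_self] at hj; exact absurd rfl hj
          · rw [Function.update_of_ne hne] at hj; exact hA j hj
        · have hsub : (Finset.univ.filter fun j => Function.update x a (y a) j ≠ y j)
              ⊆ (Finset.univ.filter fun j => x j ≠ y j).erase a := by
            intro j hj
            simp only [Finset.mem_filter, Finset.mem_erase, Finset.mem_univ, true_and] at *
            rcases eq_or_ne j a with rfl | hne
            · rw [Function.update_self] at hj; exact absurd rfl hj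
            · rw [Function.update_of_ne hne] at hj; exact ⟨hne, hj⟩
          have hamem : a ∈ Finset.univ.filter fun j => x j ≠ y j := by simp [ha]
          have h1 := Finset.card_le_card hsub
          have h2 := Finset.card_erase_of_mem hamem
          omega
  by_cases hbig : ∃ i, 2 * ε < |cc i|
  · obtain ⟨i, hi⟩ := hbig
    have hsmall : ∀ j, j ≠ i → |cc j| ≤ 2 * ε := fun j hj => claimB i j hj.symm hi
    set x0 : Fin n → Bool := fun _ => false with hx0
    set xi := Function.update x0 i true with hxi
    have hflip : g xi ≠ g x0 := by
      intro h
      have := gdiffbound _ _ h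
      have heq : f xi - f x0 = cc i := by
        have := hdiff x0 i true; simpa [hx0] using this
      rw [heq] at this; linarith
    have key : ∀ x, g x = if x i then g xi else g x0 := by
      intro x
      have hgx : g x = g (Function.update x0 i (x i)) := by
        apply aux n
        · intro j hj
          rcases eq_or_ne j i with rfl | hne
          · rw [Function.update_self] at hj; exact absurd rfl hj
          · exact hsmall j hne
        · exact le_trans (Finset.card_filter_le _ _) (by simp)
      rw [hgx]
      cases hx : x i with
      | true => rw [if_pos rfl]
      | false =>
        rw [if_neg Bool.false_ne_true]
        exact congrArg g (Function.update_eq_self i x0)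
    rcases (hg x0).1 with h0 | h0
    · have h1 : g xi = 1 := by
        rcases (hg xi).1 with h | h
        · exact absurd (h.trans h0.symm) hflip
        · exact h
      exact Or.inr (Or.inr ⟨i, Or.inl fun x => by
        rw [key x, h0, h1]⟩)
    · have h1 : g xi = 0 := by
        rcases (hg xi).1 with h | h
        · exact h
        · exact absurd (h.trans h0.symm) hflip
      exact Or.inr (Or.inr ⟨i, Or.inr fun x => by
        rw [key x, h0, h1]; cases hx : x i <;> simp [hx]⟩)
  · push_neg at hbig
    have hconst : ∀ x, g x = g (fun _ => false) := by
      intro x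
      apply aux n
      · intro j _; exact hbig j
      · exact le_trans (Finset.card_filter_le _ _) (by simp)
    rcases (hg (fun _ => false)).1 with h | h
    · exact Or.inl fun x => by rw [hconst x, h]
    · exact Or.inr (Or.inl fun x => by rw [hconst x, h])
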